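/- arXiv:1104.2224 — 7 statements merged into one kernel-verified Lean document; each statement's English description precedes it below -/
import Mathlib

section
/- Let S : X × A → ℝ be a 0-homogeneous proper scoring rule, i.e., S(x, λα) = S(x, α) for λ > 0, and Σ_x p_x S(x,q) ≥ Σ_x p_x S(x,p) for all p, q ∈ P. Define H(α) := Σ_x α_x S(x, α). Then H is 1-homogeneous, concave on A, and the vector (S(x,α))_x is a supergradient of H at each α ∈ A. -/
lemma key_lemma_5 {X : Type*} [Fintype X]
    (S : X → (X → ℝ) → ℝ)
    (hhom : ∀ x, ∀ l : ℝ, 0 < l → ∀ α : X → ℝ, (∀ y, 0 < α y) →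
      S x (l • α) = S x α)
    (hproper : ∀ p q : X → ℝ, (∀ x, 0 < p x) → ∑ x, p x = 1 →
      (∀ x, 0 < q x) → ∑ x, q x = 1 →
      ∑ x, p x * S x p ≤ ∑ x, p x * S x q)
    (α β : X → ℝ) (hα : ∀ x, 0 < α x) (hβ : ∀ x, 0 < β x) :
    ∑ x, β x * S x β ≤ ∑ x, β x * S x α := by
  rcases isEmpty_or_nonempty X with h | h
  · simp
  · have hb : 0 < ∑ x, β x := Finset.sum_pos (fun x _ => hβ x) Finset.univ_nonempty
    have ha : 0 < ∑ x, α x := Finset.sum_pos (fun x _ => hα x) Finset.univ_nonempty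
    set b := ∑ x, β x with hbdef
    set a := ∑ x, α x with hadef
    have hbinv : 0 < b⁻¹ := inv_pos.mpr hb
    have hainv : 0 < a⁻¹ := inv_pos.mpr ha
    have hp : ∀ x, 0 < (b⁻¹ • β) x := fun x => mul_pos hbinv (hβ x)
    have hq : ∀ x, 0 < (a⁻¹ • α) x := fun x => mul_pos hainv (hα x)
    have hps : ∑ x, (b⁻¹ • β) x = 1 := by
      simp only [Pi.smul_apply, smul_eq_mul, ← Finset.mul_sum]
      exact inv_mul_cancel₀ hb.ne'
    have hqs : ∑ x, (a⁻¹ • α) x = 1 := by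
      simp only [Pi.smul_apply, smul_eq_mul, ← Finset.mul_sum]
      exact inv_mul_cancel₀ ha.ne'
    have h1 := hproper (b⁻¹ • β) (a⁻¹ • α) hp hps hq hqs
    have hSp : ∀ x, S x (b⁻¹ • β) = S x β := fun x => hhom x b⁻¹ hbinv β hβ
    have hSq : ∀ x, S x (a⁻¹ • α) = S x α := fun x => hhom x a⁻¹ hainv α hα
    simp only [hSp, hSq, Pi.smul_apply, smul_eq_mul, mul_assoc, ← Finset.mul_sum] at h1
    have := mul_le_mul_of_nonneg_left h1 hb.le
    rwa [← mul_assoc, ← mul_assoc, mul_inv_cancel₀ hb.ne', one_mul, one_mul] at this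

/-- A 0-homogeneous proper scoring rule determines a 1-homogeneous concave
entropy function of which it is a supergradient. -/
theorem stmt_5 {X : Type*} [Fintype X]
    (S : X → (X → ℝ) → ℝ)
    (hhom : ∀ x, ∀ l : ℝ, 0 < l → ∀ α : X → ℝ, (∀ y, 0 < α y) →
      S x (l • α) = S x α)
    (hproper : ∀ p q : X → ℝ, (∀ x, 0 < p x) → ∑ x, p x = 1 →
      (∀ x, 0 < q x) → ∑ x, q x = 1 →
      ∑ x, p x * S x p ≤ ∑ x, p x * S x q) :
    (∀ l : ℝ, 0 < l → ∀ α : X → ℝ, (∀ x, 0 < α x) →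
        ∑ x, (l • α) x * S x (l • α) = l * ∑ x, α x * S x α)
    ∧ ConcaveOn ℝ {α : X → ℝ | ∀ x, 0 < α x} (fun α => ∑ x, α x * S x α)
    ∧ (∀ α : X → ℝ, (∀ x, 0 < α x) → ∀ β : X → ℝ, (∀ x, 0 < β x) →
        ∑ x, β x * S x β ≤ (∑ x, α x * S x α) + ∑ x, (β x - α x) * S x α) := by
  have key := key_lemma_5 S hhom hproper
  refine ⟨?_, ?_, ?_⟩
  · intro l hl α hα
    simp only [Pi.smul_apply, smul_eq_mul]
    rw [Finset.mul_sum]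
    refine Finset.sum_congr rfl fun x _ => ?_
    rw [hhom x l hl α hα]; ring
  · constructor
    · intro x hx y hy s t hs ht hst
      intro i
      rcases eq_or_lt_of_le hs with hs0 | hs0
      · have : t = 1 := by linarith
        simp [← hs0, this]
        exact hy i
      · have : 0 < s * x i := mul_pos hs0 (hx i)
        have h2 : 0 ≤ t * y i := mul_nonneg ht (hy i).le
        simpa using add_pos_of_pos_of_nonneg this h2
    · intro x hx y hy s t hs ht hst
      have hγ : ∀ i, 0 < (s • x + t • y) i := by
        intro i
        rcases eq_or_lt_of_le hs with hs0 | hs0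
        · have : t = 1 := by linarith
          simp [← hs0, this]
          exact hy i
        · have h1 : 0 < s * x i := mul_pos hs0 (hx i)
          have h2 : 0 ≤ t * y i := mul_nonneg ht (hy i).le
          simpa using add_pos_of_pos_of_nonneg h1 h2
      have hx' := key (s • x + t • y) x hγ hx
      have hy' := key (s • x + t • y) y hγ hy
      have h1 := add_le_add (mul_le_mul_of_nonneg_left hx' hs)
        (mul_le_mul_of_nonneg_left hy' ht)
      calc s • (∑ i, x i * S i x) + t • (∑ i, y i * S i y)
          ≤ s * (∑ i, x i * S i (s • x + t • y)) + t * (∑ i, y i * S i (s • x + t • y)) := h1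
        _ = ∑ i, (s • x + t • y) i * S i (s • x + t • y) := by
            rw [Finset.mul_sum, Finset.mul_sum, ← Finset.sum_add_distrib]
            refine Finset.sum_congr rfl fun i _ => ?_
            simp [Pi.add_apply, Pi.smul_apply, smul_eq_mul]; ring
  · intro α hα β hβ
    have h := key α β hα hβ
    have : (∑ x, α x * S x α) + ∑ x, (β x - α x) * S x α = ∑ x, β x * S x α := by
      rw [← Finset.sum_add_distrib]
      refine Finset.sum_congr rfl fun x _ => ?_; ring
    linarith
end

section
/- If S is a 0-homogeneous proper scoring rule on a finite sample space X and for each x the map α ↦ S(x, α) is continuously differentiable on the open positive orthant A, then the partial derivatives satisfy ∂S(x,α)/∂α_y = ∂S(y,α)/∂α_x for all x, y ∈ X and α ∈ A. -/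
open Filter Topology

section Aux

variable {X : Type*} [Fintype X] [DecidableEq X]

lemma ev_pos_aux (α : X → ℝ) (hα : ∀ z, 0 < α z) :
    ∀ᶠ y in 𝓝 α, ∀ z, 0 < y z := by
  rw [eventually_all]
  intro z
  exact (continuous_apply z).continuousAt (Ioi_mem_nhds (hα z))

/-- Euler's relation for a 0-homogeneous differentiable function. -/
lemma euler_aux (S : X → (X → ℝ) → ℝ)
    (hhom : ∀ x, ∀ l : ℝ, 0 < l → ∀ α : X → ℝ, (∀ y, 0 < α y) → S x (l • α) = S x α)
    (hdiff : ∀ x, ∀ α : X → ℝ, (∀ y, 0 < α y) → ContDiffAt ℝ 1 (S x) α)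
    (x : X) (α : X → ℝ) (hα : ∀ z, 0 < α z) :
    fderiv ℝ (S x) α α = 0 := by
  have hd : HasFDerivAt (S x) (fderiv ℝ (S x) α) α :=
    ((hdiff x α hα).differentiableAt one_ne_zero).hasFDerivAt
  have hc : HasDerivAt (fun t : ℝ => (1 + t) • α) α 0 := by
    have h1 : HasDerivAt (fun t : ℝ => (1 + t)) 1 0 := (hasDerivAt_id (0:ℝ)).const_add 1
    simpa using h1.smul_const α
  have hd' : HasFDerivAt (S x) (fderiv ℝ (S x) α) ((fun t : ℝ => (1 + t) • α) 0) := by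
    simpa using hd
  have hcomp : HasDerivAt (fun t : ℝ => S x ((1 + t) • α)) (fderiv ℝ (S x) α α) 0 := by
    have := hd'.comp_hasDerivAt 0 hc
    exact this
  have hev : (fun t : ℝ => S x ((1 + t) • α)) =ᶠ[𝓝 (0:ℝ)] (fun _ => S x α) := by
    have h1 : ∀ᶠ t : ℝ in 𝓝 0, 0 < 1 + t := by
      filter_upwards [Metric.ball_mem_nhds (0:ℝ) one_pos] with t ht
      rw [Metric.mem_ball, dist_zero_right] at ht
      have := abs_lt.mp ht
      linarith [this.1]
    filter_upwards [h1] with t ht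
    exact hhom x (1 + t) ht α hα
  have hconst : HasDerivAt (fun t : ℝ => S x ((1 + t) • α)) 0 0 :=
    (hasDerivAt_const (0:ℝ) (S x α)).congr_of_eventuallyEq hev
  exact (hconst.unique hcomp).symm

/-- Key identity: gradient orthogonality from properness and homogeneity. -/
lemma keyA_aux (hne : Nonempty X) (S : X → (X → ℝ) → ℝ)
    (hhom : ∀ x, ∀ l : ℝ, 0 < l → ∀ α : X → ℝ, (∀ y, 0 < α y) → S x (l • α) = S x α)
    (hproper : ∀ p q : X → ℝ, (∀ x, 0 < p x) → ∑ x, p x = 1 →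
      (∀ x, 0 < q x) → ∑ x, q x = 1 →
      ∑ x, p x * S x p ≤ ∑ x, p x * S x q)
    (hdiff : ∀ x, ∀ α : X → ℝ, (∀ y, 0 < α y) → ContDiffAt ℝ 1 (S x) α)
    (α : X → ℝ) (hα : ∀ z, 0 < α z) (v : X → ℝ) :
    ∑ x, α x * fderiv ℝ (S x) α v = 0 := by
  set s : ℝ := ∑ x, α x with hs
  have hspos : 0 < s := Finset.sum_pos (fun x _ => hα x) (Finset.univ_nonempty)
  have hd : ∀ x, HasFDerivAt (S x) (fderiv ℝ (S x) α) α := fun x =>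
    ((hdiff x α hα).differentiableAt one_ne_zero).hasFDerivAt
  -- the case ∑ w = 0
  have key0 : ∀ w : X → ℝ, ∑ x, w x = 0 → ∑ x, α x * fderiv ℝ (S x) α w = 0 := by
    intro w hw
    set p : X → ℝ := s⁻¹ • α with hp
    have hppos : ∀ z, 0 < p z := fun z =>
      mul_pos (inv_pos.2 hspos) (hα z)
    have hpsum : ∑ x, p x = 1 := by
      simp only [hp, Pi.smul_apply, smul_eq_mul]
      rw [← Finset.mul_sum, ← hs]
      field_simp
    have hSp : ∀ x, S x p = S x α := fun x =>
      hhom x s⁻¹ (inv_pos.2 hspos) α hα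
    set g : ℝ → ℝ := fun t => ∑ x, p x * S x (α + t • w) with hg
    have hmin : IsLocalMin g 0 := by
      have h1 : ∀ᶠ t : ℝ in 𝓝 0, ∀ z, 0 < α z + t * w z := by
        rw [eventually_all]
        intro z
        have hδ : 0 < α z / (|w z| + 1) := div_pos (hα z) (by positivity)
        filter_upwards [Metric.ball_mem_nhds (0:ℝ) hδ] with t ht
        rw [Metric.mem_ball, dist_zero_right] at ht
        have h2 : |t * w z| ≤ |t| * (|w z| + 1) := by
          rw [abs_mul]
          nlinarith [abs_nonneg t, abs_nonneg (w z)]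
        have h3 : |t| * (|w z| + 1) < α z := by
          have h4 : (0:ℝ) < |w z| + 1 := by positivity
          calc |t| * (|w z| + 1) < (α z / (|w z| + 1)) * (|w z| + 1) :=
                mul_lt_mul_of_pos_right ht h4
            _ = α z := by field_simp
        have h5 := abs_lt.mp (lt_of_le_of_lt h2 h3)
        linarith [h5.1]
      filter_upwards [h1] with t ht
      have hqpos : ∀ z, 0 < (α + t • w) z := fun z => by
        simpa [Pi.add_apply, Pi.smul_apply, smul_eq_mul] using ht z
      have hq2 : ∀ z, 0 < (s⁻¹ • (α + t • w)) z := fun z =>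
        mul_pos (inv_pos.2 hspos) (hqpos z)
      have hsum2 : ∑ x, (α x + t * w x) = s := by
        rw [Finset.sum_add_distrib, ← Finset.mul_sum, hw, ← hs]
        ring
      have hqsum : ∑ x, (s⁻¹ • (α + t • w)) x = 1 := by
        simp only [Pi.smul_apply, Pi.add_apply, smul_eq_mul]
        rw [← Finset.mul_sum, hsum2]
        field_simp
      have hpro := hproper p (s⁻¹ • (α + t • w)) hppos hpsum hq2 hqsum
      have hSq : ∀ x, S x (s⁻¹ • (α + t • w)) = S x (α + t • w) := fun x =>
        hhom x s⁻¹ (inv_pos.2 hspos) (α + t • w) hqpos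
      simp only [hSq, hSp] at hpro
      have hg0 : g 0 = ∑ x, p x * S x α := by simp [hg]
      have hgt : g t = ∑ x, p x * S x (α + t • w) := rfl
      rw [hg0, hgt]
      exact hpro
    have hg' : HasDerivAt g (∑ x, p x * fderiv ℝ (S x) α w) 0 := by
      apply HasDerivAt.fun_sum
      intro x _
      have hin : HasDerivAt (fun t : ℝ => α + t • w) w 0 := by
        have h1 : HasDerivAt (fun t : ℝ => t • w) w 0 := by
          simpa using (hasDerivAt_id (0:ℝ)).smul_const w
        simpa using h1.const_add α
      have hdx : HasFDerivAt (S x) (fderiv ℝ (S x) α) ((fun t : ℝ => α + t • w) 0) := by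
        simpa using hd x
      have hcomp : HasDerivAt (fun t : ℝ => S x (α + t • w)) (fderiv ℝ (S x) α w) 0 := by
        have := hdx.comp_hasDerivAt 0 hin
        exact this
      exact hcomp.const_mul (p x)
    have hzero : ∑ x, p x * fderiv ℝ (S x) α w = 0 := hmin.hasDerivAt_eq_zero hg'
    calc ∑ x, α x * fderiv ℝ (S x) α w
        = s * ∑ x, p x * fderiv ℝ (S x) α w := by
          rw [Finset.mul_sum]
          apply Finset.sum_congr rfl
          intro x _
          simp only [hp, Pi.smul_apply, smul_eq_mul]
          field_simp
      _ = 0 := by rw [hzero, mul_zero]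
  -- general v
  set c : ℝ := (∑ x, v x) / s with hc
  set w : X → ℝ := v - c • α with hwdef
  have hw : ∑ x, w x = 0 := by
    simp only [hwdef, Pi.sub_apply, Pi.smul_apply, smul_eq_mul]
    rw [Finset.sum_sub_distrib, ← Finset.mul_sum, ← hs, hc]
    field_simp
    ring
  have hveq : v = c • α + w := by
    funext z
    simp [hwdef]
  have heuler : ∀ x, fderiv ℝ (S x) α α = 0 := fun x => euler_aux S hhom hdiff x α hα
  have hDv : ∀ x, fderiv ℝ (S x) α v = fderiv ℝ (S x) α w := by
    intro x
    conv_lhs => rw [hveq]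
    rw [map_add, map_smul, heuler x]
    simp
  simp only [hDv]
  exact key0 w hw

end Aux

/-- Symmetry of the partial derivatives of a continuously differentiable
0-homogeneous proper scoring rule. -/
theorem stmt_6 {X : Type*} [Fintype X] [DecidableEq X]
    (S : X → (X → ℝ) → ℝ)
    (hhom : ∀ x, ∀ l : ℝ, 0 < l → ∀ α : X → ℝ, (∀ y, 0 < α y) →
      S x (l • α) = S x α)
    (hproper : ∀ p q : X → ℝ, (∀ x, 0 < p x) → ∑ x, p x = 1 →
      (∀ x, 0 < q x) → ∑ x, q x = 1 →
      ∑ x, p x * S x p ≤ ∑ x, p x * S x q)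
    (hdiff : ∀ x, ∀ α : X → ℝ, (∀ y, 0 < α y) → ContDiffAt ℝ 1 (S x) α) :
    ∀ x y, ∀ α : X → ℝ, (∀ z, 0 < α z) →
      fderiv ℝ (S x) α (Pi.single y 1) = fderiv ℝ (S y) α (Pi.single x 1) := by
  intro x y α hα
  have hne : Nonempty X := ⟨x⟩
  -- H(β) = ∑ β x * S x β ; its derivative at positive β is L β : v ↦ ∑ v x * S x β
  set L : (X → ℝ) → ((X → ℝ) →L[ℝ] ℝ) :=
    fun β => ∑ z, S z β • (ContinuousLinearMap.proj z : (X → ℝ) →L[ℝ] ℝ) with hL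
  have hH : ∀ β : X → ℝ, (∀ z, 0 < β z) →
      HasFDerivAt (fun γ => ∑ z, γ z * S z γ) (L β) β := by
    intro β hβ
    have hd : ∀ z, HasFDerivAt (S z) (fderiv ℝ (S z) β) β := fun z =>
      ((hdiff z β hβ).differentiableAt one_ne_zero).hasFDerivAt
    have hterm : ∀ z, HasFDerivAt (fun γ : X → ℝ => γ z * S z γ)
        (β z • fderiv ℝ (S z) β + S z β • (ContinuousLinearMap.proj z : (X → ℝ) →L[ℝ] ℝ)) β := by
      intro z
      have h1 : HasFDerivAt (fun γ : X → ℝ => γ z)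
          (ContinuousLinearMap.proj z : (X → ℝ) →L[ℝ] ℝ) β :=
        (ContinuousLinearMap.proj z : (X → ℝ) →L[ℝ] ℝ).hasFDerivAt
      exact h1.mul (hd z)
    have hsum := HasFDerivAt.fun_sum (fun z (_ : z ∈ Finset.univ) => hterm z)
    have hzero : (∑ z, β z • fderiv ℝ (S z) β) = (0 : (X → ℝ) →L[ℝ] ℝ) := by
      ext v
      simp only [ContinuousLinearMap.coe_sum', Finset.sum_apply,
        ContinuousLinearMap.smul_apply, smul_eq_mul, ContinuousLinearMap.zero_apply]
      exact keyA_aux hne S hhom hproper hdiff β hβ v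
    have hLeq : L β = ∑ z, (β z • fderiv ℝ (S z) β
        + S z β • (ContinuousLinearMap.proj z : (X → ℝ) →L[ℝ] ℝ)) := by
      rw [Finset.sum_add_distrib, hzero, zero_add, hL]
    rw [hLeq]
    exact hsum
  -- derivative of L at α
  set M : (X → ℝ) →L[ℝ] ((X → ℝ) →L[ℝ] ℝ) :=
    ∑ z, (fderiv ℝ (S z) α).smulRight (ContinuousLinearMap.proj z) with hM
  have hL' : HasFDerivAt L M α := by
    apply HasFDerivAt.fun_sum
    intro z _
    exact (((hdiff z α hα).differentiableAt one_ne_zero).hasFDerivAt).smul_const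
      (ContinuousLinearMap.proj z : (X → ℝ) →L[ℝ] ℝ)
  have hev : ∀ᶠ β in 𝓝 α, HasFDerivAt (fun γ => ∑ z, γ z * S z γ) (L β) β := by
    filter_upwards [ev_pos_aux α hα] with β hβ
    exact hH β hβ
  have hsymm := second_derivative_symmetric_of_eventually hev hL'
    (Pi.single y 1) (Pi.single x 1)
  have hMeval : ∀ v w : X → ℝ, M v w = ∑ z, fderiv ℝ (S z) α v * w z := by
    intro v w
    simp [hM, ContinuousLinearMap.coe_sum', Finset.sum_apply,
      ContinuousLinearMap.smulRight_apply, smul_eq_mul]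
  rw [hMeval, hMeval] at hsymm
  have e1 : ∑ z, fderiv ℝ (S z) α (Pi.single y 1) * (Pi.single x 1 : X → ℝ) z
      = fderiv ℝ (S x) α (Pi.single y 1) := by
    rw [Finset.sum_eq_single x]
    · simp
    · intro b _ hb
      simp [Pi.single_apply, hb]
    · simp
  have e2 : ∑ z, fderiv ℝ (S z) α (Pi.single x 1) * (Pi.single y 1 : X → ℝ) z
      = fderiv ℝ (S y) α (Pi.single x 1) := by
    rw [Finset.sum_eq_single y]
    · simp
    · intro b _ hb
      simp [Pi.single_apply, hb]
    · simp
  rw [e1, e2] at hsymm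
  exact hsymm
end

section
/- The entropy function of the Brier score, H(α) = −‖α‖²/α_+ where α_+ = Σ_x α_x, is concave and 1-homogeneous on the open positive orthant A, and its gradient at α ∈ A has x-component equal to (‖α/α_+‖² − 2α_x/α_+), the 0-homogeneous extension of the Brier score. -/
private lemma brier_key (a b s t p q : ℝ) (hs : 0 < s) (ht : 0 < t)
    (hp : 0 ≤ p) (hq : 0 ≤ q) (hst : 0 < p * s + q * t) :
    (p * a + q * b) ^ 2 / (p * s + q * t) ≤ p * (a ^ 2 / s) + q * (b ^ 2 / t) := by
  have h : p * (a ^ 2 / s) + q * (b ^ 2 / t) = (p * a ^ 2 * t + q * b ^ 2 * s) / (s * t) := by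
    field_simp
  rw [h, div_le_div_iff₀ hst (mul_pos hs ht)]
  nlinarith [mul_nonneg (mul_nonneg hp hq) (sq_nonneg (a * t - b * s))]

/-- The Brier entropy `H(α) = -‖α‖²/α₊` is concave, 1-homogeneous, and its
gradient is the 0-homogeneous extension of the Brier score. -/
theorem stmt_9 {X : Type*} [Fintype X] [DecidableEq X] :
    ConcaveOn ℝ {α : X → ℝ | ∀ x, 0 < α x}
      (fun α : X → ℝ => -(∑ x, α x ^ 2) / (∑ x, α x))
    ∧ (∀ l : ℝ, 0 < l → ∀ α : X → ℝ, (∀ x, 0 < α x) →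
        -(∑ x, (l • α) x ^ 2) / (∑ x, (l • α) x)
          = l * (-(∑ x, α x ^ 2) / (∑ x, α x)))
    ∧ (∀ α : X → ℝ, (∀ x, 0 < α x) →
        DifferentiableAt ℝ (fun α : X → ℝ => -(∑ x, α x ^ 2) / (∑ x, α x)) α
        ∧ ∀ x, fderiv ℝ (fun α : X → ℝ => -(∑ x, α x ^ 2) / (∑ x, α x)) α
              (Pi.single x 1)
            = (∑ y, (α y / ∑ z, α z) ^ 2) - 2 * (α x / ∑ z, α z)) := by
  have hconvset : Convex ℝ {α : X → ℝ | ∀ x, 0 < α x} := by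
    have h : {α : X → ℝ | ∀ x, 0 < α x} = Set.pi Set.univ (fun _ => Set.Ioi (0:ℝ)) := by
      ext α; simp [Set.mem_pi]
    rw [h]; exact convex_pi fun _ _ => convex_Ioi 0
  rcases isEmpty_or_nonempty X with hX | hX
  · have hf : (fun α : X → ℝ => -(∑ x, α x ^ 2) / (∑ x, α x)) = fun _ => 0 := by
      funext α; simp
    refine ⟨?_, ?_, ?_⟩
    · rw [hf]; exact concaveOn_const 0 hconvset
    · intro l hl α hα; simp
    · intro α hα; rw [hf]
      exact ⟨differentiableAt_const 0, fun x => (IsEmpty.false x).elim⟩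
  refine ⟨⟨hconvset, ?_⟩, ?_, ?_⟩
  · intro α hα β hβ p q hp hq hpq
    simp only [Set.mem_setOf_eq] at hα hβ
    have hSα : 0 < ∑ x, α x := Finset.sum_pos (fun x _ => hα x) Finset.univ_nonempty
    have hSβ : 0 < ∑ x, β x := Finset.sum_pos (fun x _ => hβ x) Finset.univ_nonempty
    have hSpos : 0 < p * ∑ x, α x + q * ∑ x, β x := by
      rcases hp.lt_or_eq with h | h
      · exact add_pos_of_pos_of_nonneg (mul_pos h hSα) (mul_nonneg hq hSβ.le)
      · have hq1 : q = 1 := by linarith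
        simp [← h, hq1]; exact hSβ
    have hx : ∀ x ∈ Finset.univ,
        (p * α x + q * β x) ^ 2 / (p * ∑ x, α x + q * ∑ x, β x)
          ≤ p * ((α x) ^ 2 / ∑ x, α x) + q * ((β x) ^ 2 / ∑ x, β x) :=
      fun x _ => brier_key _ _ _ _ _ _ hSα hSβ hp hq hSpos
    have hsum := Finset.sum_le_sum hx
    rw [← Finset.sum_div, Finset.sum_add_distrib, ← Finset.mul_sum, ← Finset.mul_sum,
      ← Finset.sum_div, ← Finset.sum_div] at hsum
    have hSsum : ∑ x, (p • α + q • β) x = p * ∑ x, α x + q * ∑ x, β x := by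
      simp [Finset.sum_add_distrib, Finset.mul_sum]
    simp only [smul_eq_mul, Pi.add_apply, Pi.smul_apply] at hSsum ⊢
    rw [hSsum]
    rw [neg_div, neg_div, neg_div, mul_neg, mul_neg, ← neg_add, neg_le_neg_iff]
    exact hsum
  · intro l hl α hα
    have hSα : 0 < ∑ x, α x := Finset.sum_pos (fun x _ => hα x) Finset.univ_nonempty
    simp only [Pi.smul_apply, smul_eq_mul, mul_pow, ← Finset.mul_sum]
    field_simp
  · intro α hα
    have hS : (0:ℝ) < ∑ z, α z := Finset.sum_pos (fun x _ => hα x) Finset.univ_nonempty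
    have hS' : (∑ z, α z) ≠ 0 := hS.ne'
    have hpowy : ∀ y : X, HasFDerivAt (fun β : X → ℝ => β y ^ 2)
        ((2 * α y) • (ContinuousLinearMap.proj y : (X → ℝ) →L[ℝ] ℝ)) α := by
      intro y
      have h := (hasFDerivAt_apply (𝕜 := ℝ) y α).mul (hasFDerivAt_apply (𝕜 := ℝ) y α)
      have e1 : (fun β : X → ℝ => β y ^ 2) = fun β => β y * β y := by
        funext β; ring
      rw [e1]
      exact h.congr_fderiv (by rw [two_mul, add_smul])
    have hnum : HasFDerivAt (fun β : X → ℝ => ∑ y, β y ^ 2)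
        (∑ y, ((2 * α y) • (ContinuousLinearMap.proj y : (X → ℝ) →L[ℝ] ℝ))) α :=
      HasFDerivAt.fun_sum fun y _ => hpowy y
    have hden : HasFDerivAt (fun β : X → ℝ => ∑ y, β y)
        (∑ y, (ContinuousLinearMap.proj y : (X → ℝ) →L[ℝ] ℝ)) α :=
      HasFDerivAt.fun_sum fun y _ => hasFDerivAt_apply (𝕜 := ℝ) y α
    have hinv : HasFDerivAt (fun β : X → ℝ => (∑ y, β y)⁻¹)
        ((-(((∑ y, α y)) ^ 2)⁻¹) • (∑ y, (ContinuousLinearMap.proj y : (X → ℝ) →L[ℝ] ℝ))) α :=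
      (hasDerivAt_inv hS').comp_hasFDerivAt α hden
    have hdiv : HasFDerivAt (fun β : X → ℝ => (-(∑ x, β x ^ 2)) * ((∑ x, β x)⁻¹)) _ α :=
      (hnum.neg).mul hinv
    have efun : (fun α : X → ℝ => -(∑ x, α x ^ 2) / (∑ x, α x))
        = fun β : X → ℝ => (-(∑ x, β x ^ 2)) * ((∑ x, β x)⁻¹) := by
      funext β; rw [div_eq_mul_inv]
    rw [efun]
    refine ⟨hdiv.differentiableAt, fun x => ?_⟩
    rw [hdiv.fderiv]
    have h2 : ∑ y, (α y / ∑ z, α z) ^ 2 = (∑ y, α y ^ 2) / (∑ z, α z) ^ 2 := by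
      simp [div_pow, Finset.sum_div]
    rw [h2]
    simp only [ContinuousLinearMap.add_apply, ContinuousLinearMap.smul_apply,
      ContinuousLinearMap.neg_apply, ContinuousLinearMap.sum_apply, Pi.neg_apply,
      ContinuousLinearMap.proj_apply, smul_eq_mul, Pi.single_apply,
      Finset.sum_ite_eq', Finset.mem_univ, if_true, mul_ite, mul_one, mul_zero]
    field_simp
    ring
end

section
/- Let X = X₁ × ⋯ × X_k be a finite product space and for each i let S_i be a strictly proper scoring rule on X_i. Define S(x, p) = Σ_{i=1}^k S_i(x_i, p(· | X^{∖i} = x^{∖i})), where p(· | X^{∖i} = x^{∖i}) denotes the conditional distribution of the i-th coordinate given the others. Then S is a strictly proper scoring rule on X (over strictly positive distributions): Σ_x p_x S(x,q) ≥ Σ_x p_x S(x,p) with equality iff q = p. -/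
set_option linter.unusedSectionVars false

section StmtAux
variable {k : ℕ} {X : Fin k → Type*} [∀ i, DecidableEq (X i)]

private lemma sp_L1 (i : Fin k) (u u' : X i) (w : ∀ j : {j // j ≠ i}, X j) :
    Function.update ((Equiv.piSplitAt i X).symm (u, w)) i u' =
      (Equiv.piSplitAt i X).symm (u', w) := by
  funext j
  rcases eq_or_ne j i with rfl | h
  · simp [Equiv.piSplitAt]
  · simp [Equiv.piSplitAt, Function.update_of_ne h, h]

private lemma sp_L2 (i : Fin k) (u : X i) (w : ∀ j : {j // j ≠ i}, X j) :
    ((Equiv.piSplitAt i X).symm (u, w)) i = u := by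
  simp [Equiv.piSplitAt]

private lemma sp_L3 (i : Fin k) (x : ∀ j, X j) :
    (Equiv.piSplitAt i X).symm (x i, fun j => x j.1) = x := by
  have := (Equiv.piSplitAt i X).symm_apply_apply x
  simpa [Equiv.piSplitAt] using this

private lemma sp_Lsum [∀ i, Fintype (X i)] (i : Fin k) (g : (∀ j, X j) → ℝ) :
    ∑ x, g x = ∑ w : (∀ j : {j // j ≠ i}, X j), ∑ u, g ((Equiv.piSplitAt i X).symm (u, w)) := by
  rw [← Equiv.sum_comp (Equiv.piSplitAt i X).symm g, Fintype.sum_prod_type, Finset.sum_comm]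

private lemma sp_Lrw [∀ i, Fintype (X i)] (i : Fin k)
    (S : X i → (X i → ℝ) → ℝ) (f d : (∀ j, X j) → ℝ) :
    ∑ x, f x * S (x i) (fun u => d (Function.update x i u) / ∑ v, d (Function.update x i v))
      = ∑ w : (∀ j : {j // j ≠ i}, X j), ∑ u, f ((Equiv.piSplitAt i X).symm (u, w)) *
          S u (fun u' => d ((Equiv.piSplitAt i X).symm (u', w)) /
            ∑ v, d ((Equiv.piSplitAt i X).symm (v, w))) := by
  rw [sp_Lsum i]
  refine Finset.sum_congr rfl fun w _ => Finset.sum_congr rfl fun u _ => ?_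
  simp only [sp_L1, sp_L2]

/-- Lifting a strictly proper score from normalized to unnormalized weights. -/
private lemma sp_lift {Y : Type*} [Fintype Y] [Nonempty Y] (T : Y → (Y → ℝ) → ℝ)
    (hT : ∀ r s : Y → ℝ, (∀ u, 0 < r u) → ∑ u, r u = 1 → (∀ u, 0 < s u) → ∑ u, s u = 1 →
      (∑ u, r u * T u r ≤ ∑ u, r u * T u s) ∧
      (∑ u, r u * T u s = ∑ u, r u * T u r ↔ s = r))
    (a b : Y → ℝ) (ha : ∀ u, 0 < a u) (hb : ∀ u, 0 < b u) :
    (∑ u, a u * T u (fun v => a v / ∑ v, a v) ≤ ∑ u, a u * T u (fun v => b v / ∑ v, b v)) ∧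
    (∑ u, a u * T u (fun v => b v / ∑ v, b v) = ∑ u, a u * T u (fun v => a v / ∑ v, a v) ↔
      (fun v => b v / ∑ v, b v) = (fun v => a v / ∑ v, a v)) := by
  have hA : 0 < ∑ v, a v := Finset.sum_pos (fun v _ => ha v) Finset.univ_nonempty
  have hB : 0 < ∑ v, b v := Finset.sum_pos (fun v _ => hb v) Finset.univ_nonempty
  have hrpos : ∀ u, 0 < a u / ∑ v, a v := fun u => div_pos (ha u) hA
  have hspos : ∀ u, 0 < b u / ∑ v, b v := fun u => div_pos (hb u) hB
  have hr1 : ∑ u, a u / ∑ v, a v = 1 := by rw [← Finset.sum_div]; exact div_self hA.ne'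
  have hs1 : ∑ u, b u / ∑ v, b v = 1 := by rw [← Finset.sum_div]; exact div_self hB.ne'
  obtain ⟨h1, h2⟩ := hT _ _ hrpos hr1 hspos hs1
  have hrew : ∀ t : Y → ℝ,
      ∑ u, a u * T u t = (∑ v, a v) * ∑ u, (a u / ∑ v, a v) * T u t := by
    intro t
    rw [Finset.mul_sum]
    refine Finset.sum_congr rfl fun u _ => ?_
    field_simp
  rw [hrew, hrew]
  exact ⟨mul_le_mul_of_nonneg_left h1 hA.le, (mul_right_inj' hA.ne').trans h2⟩

end StmtAux

/-- A sum of strictly proper scoring rules applied to full conditional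
distributions on a finite product space is strictly proper. -/
theorem stmt_12 {k : ℕ} (X : Fin k → Type*)
    [∀ i, Fintype (X i)] [∀ i, DecidableEq (X i)] [∀ i, Nontrivial (X i)]
    (S : (i : Fin k) → X i → (X i → ℝ) → ℝ)
    (hstrict : ∀ i, ∀ r s : X i → ℝ, (∀ u, 0 < r u) → ∑ u, r u = 1 →
      (∀ u, 0 < s u) → ∑ u, s u = 1 →
      (∑ u, r u * S i u r ≤ ∑ u, r u * S i u s)
      ∧ (∑ u, r u * S i u s = ∑ u, r u * S i u r ↔ s = r))
    (p q : (∀ i, X i) → ℝ)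
    (hp : ∀ x, 0 < p x) (hp1 : ∑ x, p x = 1)
    (hq : ∀ x, 0 < q x) (hq1 : ∑ x, q x = 1) :
    (∑ x, p x * ∑ i, S i (x i)
        (fun u => q (Function.update x i u) / ∑ v, q (Function.update x i v))
      ≥ ∑ x, p x * ∑ i, S i (x i)
        (fun u => p (Function.update x i u) / ∑ v, p (Function.update x i v)))
    ∧ (∑ x, p x * ∑ i, S i (x i)
        (fun u => q (Function.update x i u) / ∑ v, q (Function.update x i v))
      = ∑ x, p x * ∑ i, S i (x i)
        (fun u => p (Function.update x i u) / ∑ v, p (Function.update x i v))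
      ↔ q = p) := by
  classical
  -- Notation
  have key : ∀ (i : Fin k) (w : ∀ j : {j // j ≠ i}, X j),
      (∑ u, p ((Equiv.piSplitAt i X).symm (u, w)) *
          S i u (fun u' => p ((Equiv.piSplitAt i X).symm (u', w)) /
            ∑ v, p ((Equiv.piSplitAt i X).symm (v, w)))
        ≤ ∑ u, p ((Equiv.piSplitAt i X).symm (u, w)) *
          S i u (fun u' => q ((Equiv.piSplitAt i X).symm (u', w)) /
            ∑ v, q ((Equiv.piSplitAt i X).symm (v, w)))) ∧
      (∑ u, p ((Equiv.piSplitAt i X).symm (u, w)) *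
          S i u (fun u' => q ((Equiv.piSplitAt i X).symm (u', w)) /
            ∑ v, q ((Equiv.piSplitAt i X).symm (v, w)))
        = ∑ u, p ((Equiv.piSplitAt i X).symm (u, w)) *
          S i u (fun u' => p ((Equiv.piSplitAt i X).symm (u', w)) /
            ∑ v, p ((Equiv.piSplitAt i X).symm (v, w)))
        ↔ (fun u' => q ((Equiv.piSplitAt i X).symm (u', w)) /
            ∑ v, q ((Equiv.piSplitAt i X).symm (v, w)))
          = (fun u' => p ((Equiv.piSplitAt i X).symm (u', w)) /
            ∑ v, p ((Equiv.piSplitAt i X).symm (v, w)))) := by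
    intro i w
    exact sp_lift (S i) (hstrict i) (fun u => p _) (fun u => q _)
      (fun u => hp _) (fun u => hq _)
  -- rewrite both sides as double sums
  have hrwq : ∑ x, p x * ∑ i, S i (x i)
        (fun u => q (Function.update x i u) / ∑ v, q (Function.update x i v))
      = ∑ i, ∑ w : (∀ j : {j // j ≠ i}, X j), ∑ u, p ((Equiv.piSplitAt i X).symm (u, w)) *
          S i u (fun u' => q ((Equiv.piSplitAt i X).symm (u', w)) /
            ∑ v, q ((Equiv.piSplitAt i X).symm (v, w))) := by
    simp_rw [Finset.mul_sum]
    rw [Finset.sum_comm]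
    exact Finset.sum_congr rfl fun i _ => sp_Lrw i (S i) p q
  have hrwp : ∑ x, p x * ∑ i, S i (x i)
        (fun u => p (Function.update x i u) / ∑ v, p (Function.update x i v))
      = ∑ i, ∑ w : (∀ j : {j // j ≠ i}, X j), ∑ u, p ((Equiv.piSplitAt i X).symm (u, w)) *
          S i u (fun u' => p ((Equiv.piSplitAt i X).symm (u', w)) /
            ∑ v, p ((Equiv.piSplitAt i X).symm (v, w))) := by
    simp_rw [Finset.mul_sum]
    rw [Finset.sum_comm]
    exact Finset.sum_congr rfl fun i _ => sp_Lrw i (S i) p p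
  rw [hrwq, hrwp]
  have hle1 : ∀ i : Fin k,
      ∑ w : (∀ j : {j // j ≠ i}, X j), ∑ u, p ((Equiv.piSplitAt i X).symm (u, w)) *
          S i u (fun u' => p ((Equiv.piSplitAt i X).symm (u', w)) /
            ∑ v, p ((Equiv.piSplitAt i X).symm (v, w)))
        ≤ ∑ w : (∀ j : {j // j ≠ i}, X j), ∑ u, p ((Equiv.piSplitAt i X).symm (u, w)) *
          S i u (fun u' => q ((Equiv.piSplitAt i X).symm (u', w)) /
            ∑ v, q ((Equiv.piSplitAt i X).symm (v, w))) :=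
    fun i => Finset.sum_le_sum fun w _ => (key i w).1
  constructor
  · exact Finset.sum_le_sum fun i _ => hle1 i
  · rw [eq_comm, Finset.sum_eq_sum_iff_of_le fun i _ => hle1 i]
    constructor
    · intro h
      -- all conditionals agree
      have hcond : ∀ (i : Fin k) (w : ∀ j : {j // j ≠ i}, X j),
          (fun u' => q ((Equiv.piSplitAt i X).symm (u', w)) /
            ∑ v, q ((Equiv.piSplitAt i X).symm (v, w)))
          = (fun u' => p ((Equiv.piSplitAt i X).symm (u', w)) /
            ∑ v, p ((Equiv.piSplitAt i X).symm (v, w))) := by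
        intro i w
        have h2 := (Finset.sum_eq_sum_iff_of_le fun w _ => (key i w).1).mp
          (h i (Finset.mem_univ i))
        exact (key i w).2.mp (h2 w (Finset.mem_univ w)).symm
      -- one-step ratio invariance
      have onestep : ∀ (x : ∀ j, X j) (i : Fin k) (u : X i),
          q (Function.update x i u) / p (Function.update x i u) = q x / p x := by
        intro x i u
        set w : ∀ j : {j // j ≠ i}, X j := fun j => x j.1 with hw
        have hx : (Equiv.piSplitAt i X).symm (x i, w) = x := sp_L3 i x
        have hupd : Function.update x i u = (Equiv.piSplitAt i X).symm (u, w) := by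
          rw [← hx, sp_L1]
        have hP : 0 < ∑ v, p ((Equiv.piSplitAt i X).symm (v, w)) :=
          Finset.sum_pos (fun v _ => hp _) Finset.univ_nonempty
        have hQ : 0 < ∑ v, q ((Equiv.piSplitAt i X).symm (v, w)) :=
          Finset.sum_pos (fun v _ => hq _) Finset.univ_nonempty
        have e1 := congrFun (hcond i w) u
        have e2 := congrFun (hcond i w) (x i)
        rw [div_eq_div_iff hQ.ne' hP.ne'] at e1 e2
        rw [hx] at e2
        rw [hupd, div_eq_div_iff (hp _).ne' (hp x).ne']
        have hPne := hP.ne'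
        field_simp at e1 e2 ⊢
        nlinarith [e1, e2, hP, hQ,
          hp ((Equiv.piSplitAt i X).symm (u, w)), hp x]
      -- ratio is globally constant
      have const : ∀ x y : ∀ j, X j, q x / p x = q y / p y := by
        have keyc : ∀ (s : Finset (Fin k)) (x y : ∀ j, X j),
            (∀ j ∉ s, x j = y j) → q x / p x = q y / p y := by
          intro s
          induction s using Finset.induction_on with
          | empty =>
            intro x y hxy
            have : x = y := funext fun j => hxy j (by simp)
            rw [this]
          | @insert j s hj ih =>
            intro x y hxy
            have h1 : q x / p x = q (Function.update x j (y j)) /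
                p (Function.update x j (y j)) := (onestep x j (y j)).symm
            rw [h1]
            refine ih _ _ fun j' hj' => ?_
            rcases eq_or_ne j' j with rfl | hne
            · simp
            · rw [Function.update_of_ne hne]
              exact hxy j' (by simp [hne, hj'])
        intro x y
        exact keyc Finset.univ x y fun j hj => absurd (Finset.mem_univ j) hj
      have hne : Nonempty (∀ j, X j) := inferInstance
      obtain ⟨y⟩ := hne
      have hqc : ∀ x, q x = (q y / p y) * p x := by
        intro x
        rw [← const x y]
        exact (div_mul_cancel₀ (q x) (hp x).ne').symm
      have hsum : ∑ x, q x = (q y / p y) * ∑ x, p x := by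
        rw [Finset.mul_sum]
        exact Finset.sum_congr rfl fun x _ => hqc x
      rw [hq1, hp1, mul_one] at hsum
      funext x
      rw [hqc x, ← hsum, one_mul]
    · rintro rfl
      exact fun i _ => rfl
end

section
/- Two strictly positive probability distributions p, q on a finite product space X = X₁ × ⋯ × X_k are equal if and only if all their full conditional distributions agree: for each i and each x ∈ X, p(X_i = · | X^{∖i} = x^{∖i}) = q(X_i = · | X^{∖i} = x^{∖i}). -/
/-- Two strictly positive distributions on a finite product space are equal
iff all their full conditional distributions agree. -/
theorem stmt_13 {k : ℕ} (X : Fin k → Type*)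
    [∀ i, Fintype (X i)] [∀ i, DecidableEq (X i)]
    (p q : (∀ i, X i) → ℝ)
    (hp : ∀ x, 0 < p x) (hp1 : ∑ x, p x = 1)
    (hq : ∀ x, 0 < q x) (hq1 : ∑ x, q x = 1) :
    p = q ↔ ∀ (i : Fin k) (x : ∀ j, X j),
      (fun u => p (Function.update x i u) / ∑ v, p (Function.update x i v))
      = (fun u => q (Function.update x i u) / ∑ v, q (Function.update x i v)) := by
  constructor
  · rintro rfl i x; rfl
  · intro h
    have key : ∀ (i : Fin k) (x : ∀ j, X j) (u : X i),
        p (Function.update x i u) * q x = q (Function.update x i u) * p x := by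
      intro i x u
      have h1 := congrFun (h i x) u
      have h2 := congrFun (h i x) (x i)
      rw [Function.update_eq_self] at h2
      have hSp : 0 < ∑ v, p (Function.update x i v) :=
        Finset.sum_pos (fun v _ => hp _) ⟨x i, Finset.mem_univ _⟩
      have hSq : 0 < ∑ v, q (Function.update x i v) :=
        Finset.sum_pos (fun v _ => hq _) ⟨x i, Finset.mem_univ _⟩
      have h1' := (div_eq_div_iff hSp.ne' hSq.ne').mp h1
      have h2' := (div_eq_div_iff hSp.ne' hSq.ne').mp h2
      have goal' : p (Function.update x i u) * q x * (∑ v, q (Function.update x i v))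
          = q (Function.update x i u) * p x * (∑ v, q (Function.update x i v)) := by
        linear_combination q x * h1' - q (Function.update x i u) * h2'
      exact mul_right_cancel₀ hSq.ne' goal'
    have main : ∀ (x y : ∀ j, X j), p x * q y = q x * p y := by
      intro x y
      have step : ∀ s : Finset (Fin k),
          p (fun i => if i ∈ s then x i else y i) * q y
          = q (fun i => if i ∈ s then x i else y i) * p y := by
        intro s
        induction s using Finset.induction_on with
        | empty => simp only [Finset.notMem_empty, if_false]; exact mul_comm _ _
        | insert _ _ ha ih =>
          rename_i a s
          set z := fun i => if i ∈ s then x i else y i with hz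
          have hupd : (fun i => if i ∈ insert a s then x i else y i)
              = Function.update z a (x a) := by
            funext i
            rcases eq_or_ne i a with rfl | hne
            · simp [hz]
            · simp [Function.update_of_ne hne, hz, hne]
          rw [hupd]
          have hk := key a z (x a)
          have hqz := (hq z).ne'
          have goal' : p (Function.update z a (x a)) * q y * q z
              = q (Function.update z a (x a)) * p y * q z := by
            linear_combination q y * hk + q (Function.update z a (x a)) * ih
          exact mul_right_cancel₀ hqz goal'
      have := step Finset.univ
      simpa using this
    have hne : Nonempty (∀ i, X i) := by
      by_contra hn
      rw [not_nonempty_iff] at hn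
      simp at hp1
    obtain ⟨x0⟩ := hne
    have hsum : q x0 = p x0 := by
      have h1 : ∑ x, p x * q x0 = ∑ x, q x * p x0 := by
        exact Finset.sum_congr rfl fun x _ => main x x0
      rw [← Finset.sum_mul, ← Finset.sum_mul, hp1, hq1, one_mul, one_mul] at h1
      exact h1
    funext x
    have := main x x0
    rw [hsum] at this
    exact mul_right_cancel₀ (hp x0).ne' (by linarith [this])
end

section
/- Negative log pseudo-likelihood is a proper scoring rule: for strictly positive distributions p, q on a finite product space X = X₁ × ⋯ × X_k, defining S(x, q) = −Σ_i log q(X_i = x_i | X^{∖i} = x^{∖i}), one has Σ_x p_x S(x, q) ≥ Σ_x p_x S(x, p), with equality iff q = p. -/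
open Finset Function

lemma gibbs_aux {α : Type*} [Fintype α] (a b : α → ℝ) (ha : ∀ x, 0 < a x)
    (hb : ∀ x, 0 < b x) (hab : ∑ x, b x = ∑ x, a x) :
    0 ≤ ∑ x, a x * Real.log (a x / b x) ∧
      ((∑ x, a x * Real.log (a x / b x)) = 0 → ∀ x, a x = b x) := by
  have hterm : ∀ x, a x * Real.log (a x / b x) =
      a x * (b x / a x - 1 - Real.log (b x / a x)) + (a x - b x) := by
    intro x
    have h1 : Real.log (a x / b x) = - Real.log (b x / a x) := by
      rw [← Real.log_inv, inv_div]
    rw [h1]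
    have : a x * (b x / a x) = b x := by rw [mul_div_assoc'] ; exact mul_div_cancel_left₀ _ (ne_of_gt (ha x))
    nlinarith [this]
  have hnn : ∀ x, 0 ≤ a x * (b x / a x - 1 - Real.log (b x / a x)) := by
    intro x
    have := Real.log_le_sub_one_of_pos (div_pos (hb x) (ha x))
    nlinarith [ha x]
  have hsum : ∑ x, a x * Real.log (a x / b x)
      = ∑ x, a x * (b x / a x - 1 - Real.log (b x / a x)) := by
    rw [show (∑ x, a x * Real.log (a x / b x)) = ∑ x, (a x * (b x / a x - 1 - Real.log (b x / a x)) + (a x - b x)) from Finset.sum_congr rfl fun x _ => hterm x,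
      Finset.sum_add_distrib, Finset.sum_sub_distrib, hab]
    ring
  constructor
  · rw [hsum]; exact Finset.sum_nonneg fun x _ => hnn x
  · intro h0 x
    rw [hsum] at h0
    have hx := (Finset.sum_eq_zero_iff_of_nonneg (fun x _ => hnn x)).mp h0 x (mem_univ x)
    have h2 : b x / a x - 1 - Real.log (b x / a x) = 0 := by
      rcases mul_eq_zero.mp hx with h | h
      · exact absurd h (ne_of_gt (ha x))
      · exact h
    by_contra hne
    have hne' : b x / a x ≠ 1 := by
      intro h1
      exact hne ((div_eq_one_iff_eq (ne_of_gt (ha x))).mp h1).symm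
    have := Real.log_lt_sub_one_of_pos (div_pos (hb x) (ha x)) hne'
    linarith

-- the swap (x, u) ↦ (update x i u, x i) is a bijection
lemma count_aux {k : ℕ} {X : Fin k → Type*} [∀ i, Fintype (X i)] [∀ i, DecidableEq (X i)]
    (i : Fin k) (g : (∀ j, X j) → ℝ) :
    ∑ x, ∑ u, g (Function.update x i u) = (Fintype.card (X i) : ℝ) * ∑ x, g x := by
  have hf : Function.Involutive
      (fun z : (∀ j, X j) × X i => (Function.update z.1 i z.2, z.1 i)) := by
    intro z
    simp [Function.update_idem, Function.update_eq_self]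
  calc ∑ x, ∑ u, g (Function.update x i u)
      = ∑ z : (∀ j, X j) × X i, g (Function.update z.1 i z.2) := by
        rw [Fintype.sum_prod_type]
    _ = ∑ z : (∀ j, X j) × X i, g z.1 := by
        exact Fintype.sum_bijective _ hf.bijective _ _ (fun z => rfl)
    _ = (Fintype.card (X i) : ℝ) * ∑ x, g x := by
        rw [Fintype.sum_prod_type]
        simp [Finset.sum_const, nsmul_eq_mul, Finset.mul_sum]

lemma inv_aux {k : ℕ} {X : Fin k → Type*} [∀ i, Fintype (X i)] [∀ i, DecidableEq (X i)]
    (i : Fin k) (g : (∀ j, X j) → ℝ) (x : ∀ j, X j) (u : X i) :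
    ∑ v, g (Function.update (Function.update x i u) i v) = ∑ v, g (Function.update x i v) := by
  simp [Function.update_idem]

lemma const_aux {k : ℕ} {X : Fin k → Type*} [∀ i, Fintype (X i)] [∀ i, DecidableEq (X i)]
    (r : (∀ j, X j) → ℝ) (h : ∀ (i : Fin k) x u, r (Function.update x i u) = r x) :
    ∀ x y, r x = r y := by
  have aux : ∀ m : ℕ, ∀ x y : (∀ j, X j), (∀ j : Fin k, m ≤ (j : ℕ) → x j = y j) → r x = r y := by
    intro m
    induction m with
    | zero => intro x y hxy; exact congrArg r (funext fun j => hxy j (Nat.zero_le _))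
    | succ m ih =>
      intro x y hxy
      by_cases hm : m < k
      · set i : Fin k := ⟨m, hm⟩
        have h1 : r x = r (Function.update x i (y i)) := (h i x (y i)).symm
        rw [h1]
        apply ih
        intro j hj
        rcases eq_or_ne j i with rfl | hne
        · simp
        · rw [Function.update_of_ne hne]
          apply hxy
          have : (j : ℕ) ≠ m := fun hc => hne (Fin.ext hc)
          omega
      · apply ih
        intro j hj
        exact hxy j (by have := j.isLt; omega)
  intro x y
  exact aux k x y (fun j hj => absurd j.isLt (by omega))

/-- Negative log pseudo-likelihood is a strictly proper scoring rule. -/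
theorem stmt_14 {k : ℕ} (X : Fin k → Type*)
    [∀ i, Fintype (X i)] [∀ i, DecidableEq (X i)] [∀ i, Nontrivial (X i)]
    (p q : (∀ i, X i) → ℝ)
    (hp : ∀ x, 0 < p x) (hp1 : ∑ x, p x = 1)
    (hq : ∀ x, 0 < q x) (hq1 : ∑ x, q x = 1) :
    (∑ x, p x * (-(∑ i, Real.log (q x / ∑ u, q (Function.update x i u))))
      ≥ ∑ x, p x * (-(∑ i, Real.log (p x / ∑ u, p (Function.update x i u)))))
    ∧ (∑ x, p x * (-(∑ i, Real.log (q x / ∑ u, q (Function.update x i u))))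
        = ∑ x, p x * (-(∑ i, Real.log (p x / ∑ u, p (Function.update x i u))))
      ↔ q = p) := by
  classical
  set Sp : Fin k → (∀ j, X j) → ℝ := fun i x => ∑ u, p (Function.update x i u) with hSpdef
  set Sq : Fin k → (∀ j, X j) → ℝ := fun i x => ∑ u, q (Function.update x i u) with hSqdef
  have hSp : ∀ i x, 0 < Sp i x := fun i x =>
    Finset.sum_pos (fun u _ => hp _) Finset.univ_nonempty
  have hSq : ∀ i x, 0 < Sq i x := fun i x =>
    Finset.sum_pos (fun u _ => hq _) Finset.univ_nonempty
  set b : Fin k → (∀ j, X j) → ℝ := fun i x => q x * Sp i x / Sq i x with hbdef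
  have hbpos : ∀ i x, 0 < b i x := fun i x =>
    div_pos (mul_pos (hq x) (hSp i x)) (hSq i x)
  -- invariance of Sp, Sq under updates at i
  have hSpinv : ∀ i x u, Sp i (Function.update x i u) = Sp i x := fun i x u => inv_aux i p x u
  have hSqinv : ∀ i x u, Sq i (Function.update x i u) = Sq i x := fun i x u => inv_aux i q x u
  have hcard : ∀ i : Fin k, (0:ℝ) < (Fintype.card (X i) : ℝ) := fun i => by
    exact_mod_cast Fintype.card_pos
  -- sum of b i is 1
  have hbsum : ∀ i, ∑ x, b i x = 1 := by
    intro i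
    have key := count_aux i (b i)
    have h2 : ∀ x : (∀ j, X j), ∑ u, b i (Function.update x i u) = Sp i x := by
      intro x
      have : ∀ u : X i, b i (Function.update x i u)
          = q (Function.update x i u) * (Sp i x / Sq i x) := by
        intro u
        simp only [hbdef, hSpinv, hSqinv]
        ring
      rw [Finset.sum_congr rfl fun u _ => this u, ← Finset.sum_mul]
      rw [show (∑ u, q (Function.update x i u)) = Sq i x from rfl]
      field_simp
      exact mul_div_cancel_left₀ _ (ne_of_gt (hSq i x))
    have h3 : ∑ x, ∑ u, b i (Function.update x i u) = ∑ x, Sp i x :=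
      Finset.sum_congr rfl fun x _ => h2 x
    have h4 : ∑ x, Sp i x = (Fintype.card (X i) : ℝ) := by
      have := count_aux i p
      simp only [hSpdef]
      rw [this, hp1, mul_one]
    rw [key, h4] at h3
    exact mul_left_cancel₀ (ne_of_gt (hcard i)) (h3.trans (mul_one _).symm)
  -- the per-coordinate divergences
  set D : Fin k → ℝ := fun i => ∑ x, p x * Real.log (p x / b i x) with hDdef
  have hgibbs : ∀ i, 0 ≤ D i ∧ (D i = 0 → ∀ x, p x = b i x) := by
    intro i
    exact gibbs_aux p (b i) hp (hbpos i) (by rw [hbsum i, hp1])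
  -- key decomposition
  have hlog : ∀ i (x : ∀ j, X j),
      Real.log (p x / Sp i x) - Real.log (q x / Sq i x) = Real.log (p x / b i x) := by
    intro i x
    rw [Real.log_div (ne_of_gt (hp x)) (ne_of_gt (hSp i x)),
      Real.log_div (ne_of_gt (hq x)) (ne_of_gt (hSq i x)),
      Real.log_div (ne_of_gt (hp x)) (ne_of_gt (hbpos i x)),
      show b i x = q x * Sp i x / Sq i x from rfl,
      Real.log_div (ne_of_gt (mul_pos (hq x) (hSp i x))) (ne_of_gt (hSq i x)),
      Real.log_mul (ne_of_gt (hq x)) (ne_of_gt (hSp i x))]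
    ring
  have hkey : (∑ x, p x * (-(∑ i, Real.log (q x / Sq i x))))
      - (∑ x, p x * (-(∑ i, Real.log (p x / Sp i x)))) = ∑ i, D i := by
    rw [← Finset.sum_sub_distrib]
    have : ∀ x : (∀ j, X j),
        p x * (-(∑ i, Real.log (q x / Sq i x))) - p x * (-(∑ i, Real.log (p x / Sp i x)))
        = ∑ i, p x * Real.log (p x / b i x) := by
      intro x
      have e1 : p x * (-(∑ i, Real.log (q x / Sq i x))) - p x * (-(∑ i, Real.log (p x / Sp i x)))
          = p x * (∑ i, (Real.log (p x / Sp i x) - Real.log (q x / Sq i x))) := by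
        rw [Finset.sum_sub_distrib]; ring
      rw [e1, Finset.mul_sum]
      exact Finset.sum_congr rfl fun i _ => by rw [hlog i x]
    rw [Finset.sum_congr rfl fun x _ => this x, Finset.sum_comm]
  have hDsum : 0 ≤ ∑ i, D i := Finset.sum_nonneg fun i _ => (hgibbs i).1
  constructor
  · linarith
  · constructor
    · intro heq
      have hzero : ∑ i, D i = 0 := by rw [← hkey]; linarith
      have hDzero : ∀ i, D i = 0 := fun i =>
        (Finset.sum_eq_zero_iff_of_nonneg (fun i _ => (hgibbs i).1)).mp hzero i (mem_univ i)
      have hpb : ∀ i x, p x = b i x := fun i => (hgibbs i).2 (hDzero i)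
      set r : (∀ j, X j) → ℝ := fun x => p x / q x with hrdef
      have hr : ∀ i x, r x = Sp i x / Sq i x := by
        intro i x
        simp only [hrdef]
        rw [hpb i x]
        show q x * Sp i x / Sq i x / q x = _
        rw [mul_div_assoc]
        exact mul_div_cancel_left₀ _ (ne_of_gt (hq x))
      have hrinv : ∀ (i : Fin k) x u, r (Function.update x i u) = r x := by
        intro i x u
        rw [hr i, hr i, hSpinv, hSqinv]
      have hconst := const_aux r hrinv
      obtain ⟨x₀⟩ : Nonempty (∀ j, X j) := inferInstance
      have hpx : ∀ x, p x = r x₀ * q x := by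
        intro x
        rw [← hconst x x₀]
        simp only [hrdef]
        exact (div_mul_cancel₀ _ (ne_of_gt (hq x))).symm
      have hc1 : r x₀ = 1 := by
        have : ∑ x, p x = ∑ x, r x₀ * q x := Finset.sum_congr rfl fun x _ => hpx x
        rw [hp1, ← Finset.mul_sum, hq1, mul_one] at this
        linarith
      funext x
      have := hpx x
      rw [hc1, one_mul] at this
      exact this.symm
    · intro h
      subst h
      rfl
end

section
/- Let G be an undirected graph on a finite set X and H : A → ℝ a twice continuously differentiable function on the positive orthant A such that ∂²H/∂α_x∂α_y = 0 whenever x ≠ y and x, y are not adjacent in G. Then H admits an additive decomposition H(α) = Σ_{B complete in G} h_B(α_B), where the sum is over complete subsets B of G and each h_B depends only on the coordinates α_B. -/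
open Finset

/-- A real function with zero derivative on `Ioi 0` is constant there. -/
lemma aux_const_Ioi {f : ℝ → ℝ} (hf : ∀ u ∈ Set.Ioi (0:ℝ), HasDerivAt f 0 u)
    {a b : ℝ} (ha : 0 < a) (hb : 0 < b) : f a = f b := by
  have h : ‖f b - f a‖ ≤ 0 * ‖b - a‖ :=
    (convex_Ioi (0:ℝ)).norm_image_sub_le_of_norm_hasDerivWithin_le (C := 0)
      (f' := fun _ => 0) (fun u hu => (hf u hu).hasDerivWithinAt)
      (fun u _ => by simp) ha hb
  have h2 : ‖f b - f a‖ ≤ 0 := by simpa using h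
  have h3 : f b - f a = 0 := norm_le_zero_iff.mp h2
  linarith

/-- A function whose mixed partials vanish across non-edges of a graph `G`
decomposes additively over the complete subsets of `G`. -/
theorem stmt_17 {X : Type*} [Fintype X] [DecidableEq X]
    (G : SimpleGraph X) [DecidableRel G.Adj]
    (H : (X → ℝ) → ℝ)
    (hH : ContDiffOn ℝ 2 H {α : X → ℝ | ∀ z, 0 < α z})
    (hmix : ∀ x y : X, x ≠ y → ¬ G.Adj x y → ∀ α : X → ℝ, (∀ z, 0 < α z) →
      fderiv ℝ (fun β => fderiv ℝ H β (Pi.single y 1)) α (Pi.single x 1) = 0) :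
    ∃ h : Finset X → (X → ℝ) → ℝ,
      (∀ B : Finset X, ∀ α β : X → ℝ, (∀ z, 0 < α z) → (∀ z, 0 < β z) →
        (∀ z ∈ B, α z = β z) → h B α = h B β)
      ∧ ∀ α : X → ℝ, (∀ z, 0 < α z) →
          H α = ∑ B ∈ Finset.univ.filter
              (fun B : Finset X => ∀ x ∈ B, ∀ y ∈ B, x ≠ y → G.Adj x y),
            h B α := by
  classical
  set S : Set (X → ℝ) := {α : X → ℝ | ∀ z, 0 < α z} with hS_def
  have hSopen : IsOpen S := by
    have : S = Set.pi Set.univ (fun _ : X => Set.Ioi (0:ℝ)) := by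
      ext α; simp [hS_def, Set.mem_pi]
    rw [this]
    exact isOpen_set_pi Set.finite_univ (fun z _ => isOpen_Ioi)
  have hdiff : DifferentiableOn ℝ H S := hH.differentiableOn (by norm_num)
  have hfd : ContDiffOn ℝ 1 (fderiv ℝ H) S :=
    hH.fderiv_of_isOpen hSopen (by norm_num)
  have hHat : ∀ β ∈ S, HasFDerivAt H (fderiv ℝ H β) β := fun β hβ =>
    ((hdiff β hβ).differentiableAt (hSopen.mem_nhds hβ)).hasFDerivAt
  have hKdiff : ∀ (y : X), ∀ β ∈ S,
      DifferentiableAt ℝ (fun γ => fderiv ℝ H γ (Pi.single y (1:ℝ))) β := by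
    intro y β hβ
    have h1 : DifferentiableAt ℝ (fderiv ℝ H) β :=
      ((hfd.differentiableOn one_ne_zero) β hβ).differentiableAt (hSopen.mem_nhds hβ)
    exact h1.clm_apply (differentiableAt_const _)
  -- the key analytic bracket lemma
  have bracket : ∀ x y : X, x ≠ y → ¬ G.Adj x y → ∀ c : X → ℝ,
      (∀ z, z ≠ x → z ≠ y → 0 < c z) → c x = 0 → c y = 0 →
      ∀ s t : ℝ, 0 < s → 0 < t →
      H (c + s • (Pi.single x (1:ℝ) : X → ℝ) + t • (Pi.single y (1:ℝ) : X → ℝ))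
        - H (c + s • (Pi.single x (1:ℝ) : X → ℝ) + (1:ℝ) • (Pi.single y (1:ℝ) : X → ℝ))
        - H (c + (1:ℝ) • (Pi.single x (1:ℝ) : X → ℝ) + t • (Pi.single y (1:ℝ) : X → ℝ))
        + H (c + (1:ℝ) • (Pi.single x (1:ℝ) : X → ℝ) + (1:ℝ) • (Pi.single y (1:ℝ) : X → ℝ)) = 0 := by
    intro x y hxy hadj c hc hcx hcy s t hs ht
    set q : ℝ → ℝ → (X → ℝ) := fun s t => c + s • (Pi.single x (1:ℝ) : X → ℝ) + t • (Pi.single y (1:ℝ) : X → ℝ) with hq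
    have hqmem : ∀ s t : ℝ, 0 < s → 0 < t → q s t ∈ S := by
      intro s t hs ht z
      by_cases hzx : z = x
      · subst hzx
        simpa [hq, hcx, Pi.single_eq_same, Pi.single_eq_of_ne hxy] using hs
      by_cases hzy : z = y
      · subst hzy
        simpa [hq, hcy, Pi.single_eq_same, Pi.single_eq_of_ne hxy.symm] using ht
      · simpa [hq, Pi.single_eq_of_ne hzx, Pi.single_eq_of_ne hzy] using hc z hzx hzy
    have hcurve_y : ∀ s t : ℝ, 0 < s → 0 < t →
        HasDerivAt (fun t' => H (q s t')) (fderiv ℝ H (q s t) ((Pi.single y (1:ℝ) : X → ℝ))) t := by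
      intro s t hs ht
      have h1 : HasDerivAt (fun t' : ℝ => q s t') ((Pi.single y (1:ℝ) : X → ℝ)) t := by
        have h2 : HasDerivAt (fun t' : ℝ => t' • (Pi.single y (1:ℝ) : X → ℝ))
            ((1:ℝ) • (Pi.single y (1:ℝ) : X → ℝ)) t := (hasDerivAt_id t).smul_const _
        simpa [hq] using h2.const_add (c + s • (Pi.single x (1:ℝ) : X → ℝ))
      exact (hHat _ (hqmem s t hs ht)).comp_hasDerivAt t h1
    have hpsi : ∀ t : ℝ, 0 < t → ∀ a : ℝ, 0 < a →
        fderiv ℝ H (q a t) ((Pi.single y (1:ℝ) : X → ℝ)) = fderiv ℝ H (q 1 t) ((Pi.single y (1:ℝ) : X → ℝ)) := by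
      intro t ht a ha
      have hder : ∀ u ∈ Set.Ioi (0:ℝ),
          HasDerivAt (fun s' => fderiv ℝ H (q s' t) ((Pi.single y (1:ℝ) : X → ℝ))) 0 u := by
        intro u hu
        have h1 : HasDerivAt (fun s' : ℝ => q s' t) ((Pi.single x (1:ℝ) : X → ℝ)) u := by
          have h2 : HasDerivAt (fun s' : ℝ => s' • (Pi.single x (1:ℝ) : X → ℝ))
              ((1:ℝ) • (Pi.single x (1:ℝ) : X → ℝ)) u := (hasDerivAt_id u).smul_const _
          have h3 := (h2.const_add c).add_const (t • (Pi.single y (1:ℝ) : X → ℝ))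
          simpa [hq] using h3
        have hmem := hqmem u t hu ht
        have h4 := ((hKdiff y _ hmem).hasFDerivAt).comp_hasDerivAt u h1
        have h5 : fderiv ℝ (fun γ => fderiv ℝ H γ ((Pi.single y (1:ℝ) : X → ℝ))) (q u t) ((Pi.single x (1:ℝ) : X → ℝ)) = 0 :=
          hmix x y hxy hadj _ hmem
        rw [h5] at h4
        exact h4
      exact aux_const_Ioi hder ha one_pos
    have hg : ∀ u ∈ Set.Ioi (0:ℝ),
        HasDerivAt (fun t' => H (q s t') - H (q 1 t')) 0 u := by
      intro u hu
      have h1 := (hcurve_y s u hs hu).sub (hcurve_y 1 u one_pos hu)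
      have h2 := hpsi u hu s hs
      rw [h2, sub_self] at h1
      exact h1
    have := aux_const_Ioi hg ht one_pos
    simp only [hq] at this ⊢
    linarith
  -- the pieces of the decomposition
  set m : Finset X → (X → ℝ) → (X → ℝ) :=
    fun A α z => if z ∈ A then α z else 1 with hm_def
  set h : Finset X → (X → ℝ) → ℝ :=
    fun B α => ∑ A ∈ B.powerset, (-1:ℝ) ^ (B.card - A.card) * H (m A α) with hh_def
  refine ⟨h, ?_, ?_⟩
  · -- locality
    intro B α β hα hβ hab
    apply Finset.sum_congr rfl
    intro A hA
    have hAB := Finset.mem_powerset.mp hA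
    have : m A α = m A β := by
      funext z
      by_cases hz : z ∈ A
      · simp [hm_def, hz, hab z (hAB hz)]
      · simp [hm_def, hz]
    rw [this]
  · -- the decomposition
    intro α hα
    -- (a) incomplete pieces vanish
    have hzero : ∀ B : Finset X, (¬ ∀ x ∈ B, ∀ y ∈ B, x ≠ y → G.Adj x y) → h B α = 0 := by
      intro B hB
      push_neg at hB
      obtain ⟨x, hxB, y, hyB, hxy, hadj⟩ := hB
      set B' : Finset X := (B.erase x).erase y with hB'_def
      have hyB' : y ∉ B' := Finset.notMem_erase _ _
      have hxB'' : x ∉ insert y B' := by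
        simp only [Finset.mem_insert]
        rintro (rfl | hx)
        · exact hxy rfl
        · exact Finset.notMem_erase x _ (Finset.mem_of_mem_erase hx)
      have hBeq : B = insert x (insert y B') := by
        rw [hB'_def, Finset.insert_erase (Finset.mem_erase.mpr ⟨hxy.symm, hyB⟩),
          Finset.insert_erase hxB]
      have hcard : B.card = B'.card + 2 := by
        rw [hBeq, Finset.card_insert_of_notMem hxB'', Finset.card_insert_of_notMem hyB']
      have key : ∀ A ∈ B'.powerset,
          (((-1:ℝ) ^ (B.card - A.card) * H (m A α)
            + (-1:ℝ) ^ (B.card - (insert y A).card) * H (m (insert y A) α))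
          + ((-1:ℝ) ^ (B.card - (insert x A).card) * H (m (insert x A) α)
            + (-1:ℝ) ^ (B.card - (insert x (insert y A)).card)
              * H (m (insert x (insert y A)) α))) = 0 := by
        intro A hA
        have hAB' := Finset.mem_powerset.mp hA
        have hyA : y ∉ A := fun hy => hyB' (hAB' hy)
        have hxA : x ∉ A := fun hx =>
          Finset.notMem_erase x _ (Finset.mem_of_mem_erase (hAB' hx))
        have hxyA : x ∉ insert y A := by
          simp only [Finset.mem_insert]
          rintro (rfl | hx)
          · exact hxy rfl
          · exact hxA hx
        have hcA : A.card ≤ B'.card := Finset.card_le_card hAB'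
        have hcyA : (insert y A).card = A.card + 1 := Finset.card_insert_of_notMem hyA
        have hcxA : (insert x A).card = A.card + 1 := Finset.card_insert_of_notMem hxA
        have hcxyA : (insert x (insert y A)).card = A.card + 2 := by
          rw [Finset.card_insert_of_notMem hxyA, hcyA]
        set c : X → ℝ := fun z => if z ∈ A then α z else (if z = x ∨ z = y then 0 else 1)
          with hc_def
        have hcx : c x = 0 := by simp [hc_def, hxA]
        have hcy : c y = 0 := by simp [hc_def, hyA]
        have hcpos : ∀ z, z ≠ x → z ≠ y → 0 < c z := by
          intro z hzx hzy
          by_cases hz : z ∈ A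
          · simpa [hc_def, hz] using hα z
          · simp [hc_def, hz, hzx, hzy]
        have hR : ∀ s t : ℝ,
            (c + s • (Pi.single x (1:ℝ) : X → ℝ) + t • (Pi.single y (1:ℝ) : X → ℝ))
              = fun z => if z ∈ A then α z
                else (if z = x then s else (if z = y then t else 1)) := by
          intro s t
          funext z
          by_cases hzx : z = x
          · subst hzx
            simp [hc_def, hxA, Pi.single_eq_same, Pi.single_eq_of_ne hxy]
          by_cases hzy : z = y
          · subst hzy
            simp [hc_def, hyA, hzx, Pi.single_eq_same, Pi.single_eq_of_ne hxy.symm]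
          by_cases hz : z ∈ A
          · simp [hc_def, hz, Pi.single_eq_of_ne hzx, Pi.single_eq_of_ne hzy]
          · simp [hc_def, hz, hzx, hzy, Pi.single_eq_of_ne hzx, Pi.single_eq_of_ne hzy]
        have e1 : m A α = c + (1:ℝ) • (Pi.single x (1:ℝ) : X → ℝ) + (1:ℝ) • (Pi.single y (1:ℝ) : X → ℝ) := by
          rw [hR]; funext z
          by_cases hz : z ∈ A
          · simp [hm_def, hz]
          · by_cases hzx : z = x <;> by_cases hzy : z = y <;>
              simp [hm_def, hz, hzx, hzy]
        have e2 : m (insert y A) α = c + (1:ℝ) • (Pi.single x (1:ℝ) : X → ℝ) + (α y) • (Pi.single y (1:ℝ) : X → ℝ) := by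
          rw [hR]; funext z
          by_cases hz : z ∈ A
          · have hzx : z ≠ x := fun hh => hxA (hh ▸ hz)
            have hzy : z ≠ y := fun hh => hyA (hh ▸ hz)
            simp [hm_def, Finset.mem_insert, hz, hzx, hzy]
          · by_cases hzx : z = x
            · subst hzx
              simp [hm_def, Finset.mem_insert, hz, hxy]
            · by_cases hzy : z = y
              · subst hzy
                simp [hm_def, Finset.mem_insert, hz, hzx]
              · simp [hm_def, Finset.mem_insert, hz, hzx, hzy]
        have e3 : m (insert x A) α = c + (α x) • (Pi.single x (1:ℝ) : X → ℝ) + (1:ℝ) • (Pi.single y (1:ℝ) : X → ℝ) := by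
          rw [hR]; funext z
          by_cases hz : z ∈ A
          · have hzx : z ≠ x := fun hh => hxA (hh ▸ hz)
            have hzy : z ≠ y := fun hh => hyA (hh ▸ hz)
            simp [hm_def, Finset.mem_insert, hz, hzx, hzy]
          · by_cases hzx : z = x
            · subst hzx
              simp [hm_def, Finset.mem_insert, hz]
            · by_cases hzy : z = y
              · subst hzy
                simp [hm_def, Finset.mem_insert, hz, hxy.symm, hzx]
              · simp [hm_def, Finset.mem_insert, hz, hzx, hzy]
        have e4 : m (insert x (insert y A)) α
            = c + (α x) • (Pi.single x (1:ℝ) : X → ℝ) + (α y) • (Pi.single y (1:ℝ) : X → ℝ) := by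
          rw [hR]; funext z
          by_cases hz : z ∈ A
          · have hzx : z ≠ x := fun hh => hxA (hh ▸ hz)
            have hzy : z ≠ y := fun hh => hyA (hh ▸ hz)
            simp [hm_def, Finset.mem_insert, hz, hzx, hzy]
          · by_cases hzx : z = x
            · subst hzx
              simp [hm_def, Finset.mem_insert, hz]
            · by_cases hzy : z = y
              · subst hzy
                simp [hm_def, Finset.mem_insert, hz, hzx]
              · simp [hm_def, Finset.mem_insert, hz, hzx, hzy]
        have hbr := bracket x y hxy hadj c hcpos hcx hcy (α x) (α y) (hα x) (hα y)
        rw [← e1, ← e2, ← e3, ← e4] at hbr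
        -- exponents
        set j : ℕ := B'.card - A.card with hj_def
        have ej0 : B.card - A.card = j + 2 := by omega
        have ej1 : B.card - (insert y A).card = j + 1 := by omega
        have ej2 : B.card - (insert x A).card = j + 1 := by omega
        have ej3 : B.card - (insert x (insert y A)).card = j := by omega
        rw [ej0, ej1, ej2, ej3]
        have p0 : (-1:ℝ) ^ (j + 2) = (-1:ℝ) ^ j := by ring
        have p1 : (-1:ℝ) ^ (j + 1) = -((-1:ℝ) ^ j) := by ring
        rw [p0, p1]
        have hring : ((-1:ℝ) ^ j * H (m A α) + -(-1:ℝ) ^ j * H (m (insert y A) α))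
            + (-(-1:ℝ) ^ j * H (m (insert x A) α)
              + (-1:ℝ) ^ j * H (m (insert x (insert y A)) α))
            = (-1:ℝ) ^ j * (H (m (insert x (insert y A)) α) - H (m (insert x A) α)
                - H (m (insert y A) α) + H (m A α)) := by ring
        rw [hring, hbr, mul_zero]
      simp only [hh_def]
      rw [hBeq, Finset.sum_powerset_insert hxB'', Finset.sum_powerset_insert hyB',
        Finset.sum_powerset_insert hyB', ← hBeq]
      rw [← Finset.sum_add_distrib, ← Finset.sum_add_distrib, ← Finset.sum_add_distrib]
      rw [Finset.sum_congr rfl key]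
      · simp
    -- (b) total sum over all subsets equals H
    have htotal : ∑ B ∈ (Finset.univ : Finset (Finset X)), h B α = H α := by
      have hpow : ∀ B : Finset X,
          B.powerset = (Finset.univ : Finset (Finset X)).filter (· ⊆ B) := by
        intro B; ext A; simp [Finset.mem_powerset]
      have step1 : ∀ B : Finset X, h B α
          = ∑ A ∈ (Finset.univ : Finset (Finset X)),
              (if A ⊆ B then (-1:ℝ) ^ (B.card - A.card) * H (m A α) else 0) := by
        intro B
        simp only [hh_def]
        rw [hpow B, Finset.sum_filter]
      calc ∑ B ∈ (Finset.univ : Finset (Finset X)), h B α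
          = ∑ B ∈ (Finset.univ : Finset (Finset X)),
              ∑ A ∈ (Finset.univ : Finset (Finset X)),
                (if A ⊆ B then (-1:ℝ) ^ (B.card - A.card) * H (m A α) else 0) :=
            Finset.sum_congr rfl fun B _ => step1 B
        _ = ∑ A ∈ (Finset.univ : Finset (Finset X)),
              ∑ B ∈ (Finset.univ : Finset (Finset X)),
                (if A ⊆ B then (-1:ℝ) ^ (B.card - A.card) * H (m A α) else 0) :=
            Finset.sum_comm
        _ = ∑ A ∈ (Finset.univ : Finset (Finset X)),
              (∑ B ∈ (Finset.univ : Finset (Finset X)).filter (A ⊆ ·),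
                (-1:ℝ) ^ (B.card - A.card)) * H (m A α) := by
            refine Finset.sum_congr rfl fun A _ => ?_
            rw [Finset.sum_mul, Finset.sum_filter]
        _ = ∑ A ∈ (Finset.univ : Finset (Finset X)),
              (if A = Finset.univ then (1:ℝ) else 0) * H (m A α) := by
            refine Finset.sum_congr rfl fun A _ => ?_
            congr 1
            -- reindex B ↦ B \ A
            have hbij : ∑ B ∈ (Finset.univ : Finset (Finset X)).filter (A ⊆ ·),
                (-1:ℝ) ^ (B.card - A.card)
                = ∑ C ∈ ((Finset.univ : Finset X) \ A).powerset, (-1:ℝ) ^ C.card := by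
              refine Finset.sum_nbij' (fun B => B \ A) (fun C => A ∪ C) ?_ ?_ ?_ ?_ ?_
              · intro B hB
                simp only [Finset.mem_filter, Finset.mem_univ, true_and] at hB
                simp only [Finset.mem_powerset]
                exact Finset.sdiff_subset_sdiff (Finset.subset_univ B) le_rfl
              · intro C _; simp
              · intro B hB
                simp only [Finset.mem_filter, Finset.mem_univ, true_and] at hB
                exact Finset.union_sdiff_of_subset hB
              · intro C hC
                simp only [Finset.mem_powerset] at hC
                have hdisj : Disjoint A C := by
                  refine Finset.disjoint_left.mpr fun a haA haC => ?_
                  have := hC haC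
                  simp only [Finset.mem_sdiff] at this
                  exact this.2 haA
                show (A ∪ C) \ A = C
                exact Finset.union_sdiff_cancel_left hdisj
              · intro B hB
                simp only [Finset.mem_filter, Finset.mem_univ, true_and] at hB
                rw [Finset.card_sdiff_of_subset hB]
            rw [hbij]
            have hz := Finset.sum_powerset_neg_one_pow_card
              (x := (Finset.univ : Finset X) \ A)
            have hcast : ∑ C ∈ ((Finset.univ : Finset X) \ A).powerset, (-1:ℝ) ^ C.card
                = ((∑ C ∈ ((Finset.univ : Finset X) \ A).powerset, (-1:ℤ) ^ C.card : ℤ) : ℝ) := by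
              push_cast
              rfl
            rw [hcast, hz]
            by_cases hA : A = Finset.univ
            · simp [hA]
            · have : (Finset.univ : Finset X) \ A ≠ ∅ := by
                intro hcon
                apply hA
                have := Finset.sdiff_eq_empty_iff_subset.mp hcon
                exact Finset.eq_univ_iff_forall.mpr fun a => this (Finset.mem_univ a)
              simp [this, hA]
        _ = H (m Finset.univ α) := by
            have hstep : ∀ A ∈ (Finset.univ : Finset (Finset X)),
                (if A = Finset.univ then (1:ℝ) else 0) * H (m A α)
                  = if A = Finset.univ then H (m A α) else 0 := by
              intro A _
              by_cases hA : A = Finset.univ <;> simp [hA]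
            rw [Finset.sum_congr rfl hstep,
              Finset.sum_ite_eq' (Finset.univ : Finset (Finset X)) Finset.univ
                (fun A => H (m A α))]
            simp
        _ = H α := by
            congr 1
            funext z
            simp [hm_def]
    -- conclude
    have hsub : ∑ B ∈ Finset.univ.filter
        (fun B : Finset X => ∀ x ∈ B, ∀ y ∈ B, x ≠ y → G.Adj x y), h B α
        = ∑ B ∈ (Finset.univ : Finset (Finset X)), h B α := by
      refine Finset.sum_subset (Finset.filter_subset _ _) ?_
      intro B _ hB
      simp only [Finset.mem_filter, Finset.mem_univ, true_and] at hB
      exact hzero B hB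
    rw [hsub, htotal]
end
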